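/- Let C be a binary linear code with parity-check matrix H. Then w_maxfrac^min(H) ≤ w_AWGNC^min(H) ≤ w_BEC^min(H) and w_maxfrac^min(H) ≤ w_BSC^min(H) ≤ w_BEC^min(H). -/

import Mathlib

open Matrix BigOperators Finset

section Defs

variable {J I : Type*} [Fintype J] [Fintype I] [DecidableEq I]

/-- The support of row `j` of a binary matrix `H`. -/
def rowSupp (H : Matrix J I (ZMod 2)) (j : J) : Finset I :=
  Finset.univ.filter fun i => H j i = 1

/-- The fundamental cone of a binary matrix `H`. -/
def fundCone (H : Matrix J I (ZMod 2)) : Set (I → ℝ) :=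
  {x | (∀ i, 0 ≤ x i) ∧
    ∀ j : J, ∀ ℓ ∈ rowSupp H j, x ℓ ≤ ∑ i ∈ (rowSupp H j).erase ℓ, x i}

/-- BEC pseudoweight: size of the support. -/
noncomputable def wBEC (x : I → ℝ) : ℝ := ({i | x i ≠ 0}.ncard : ℝ)

/-- AWGNC pseudoweight. -/
noncomputable def wAWGNC (x : I → ℝ) : ℝ := (∑ i, x i) ^ 2 / ∑ i, x i ^ 2

/-- Max-fractional weight. -/
noncomputable def wMaxFrac (x : I → ℝ) : ℝ := (∑ i, x i) / sSup (Set.range x)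

/-- `H` is a parity-check matrix of the code `C`. -/
def IsParityCheck (H : Matrix J I (ZMod 2)) (C : Submodule (ZMod 2) (I → ZMod 2)) : Prop :=
  ∀ c, c ∈ C ↔ H.mulVec c = 0

/-- Minimum Hamming distance of a code. -/
noncomputable def minDist (C : Submodule (ZMod 2) (I → ZMod 2)) : ℕ :=
  sInf {d | ∃ c ∈ C, c ≠ 0 ∧ hammingNorm c = d}

/-- Minimum pseudoweight of `H` w.r.t. pseudoweight function `w`:
the infimum of `w` over all nonzero pseudocodewords (`⊤` if there are none). -/
noncomputable def minPW (w : (I → ℝ) → ℝ) (H : Matrix J I (ZMod 2)) : EReal :=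
  sInf ((fun x => (w x : EReal)) '' (fundCone H \ {0}))

/-- The chain (connectivity) relation associated with a binary matrix whose rows
have weight 2: `i` and `i'` are related iff they are equal or joined by a chain of rows
whose supports are exactly consecutive pairs. -/
def chainRel (H : Matrix J I (ZMod 2)) (i i' : I) : Prop :=
  i = i' ∨ ∃ ℓ : ℕ, 1 ≤ ℓ ∧ ∃ (c : Fin (ℓ + 1) → I) (r : Fin ℓ → J),
    c 0 = i ∧ c (Fin.last ℓ) = i' ∧
    ∀ t : Fin ℓ, rowSupp H (r t) = {c t.castSucc, c t.succ}

/-- The 0-1 real matrix associated with a binary matrix. -/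
def toRealMatrix (H : Matrix J I (ZMod 2)) : Matrix J I ℝ :=
  Matrix.of fun j i => if H j i = 1 then (1 : ℝ) else 0

/-- The Tanner graph of a binary matrix. -/
def tannerGraph (H : Matrix J I (ZMod 2)) : SimpleGraph (J ⊕ I) :=
  SimpleGraph.fromRel fun u v => ∃ j i, u = Sum.inl j ∧ v = Sum.inr i ∧ H j i = 1

end Defs

/-- The multiset of (real) eigenvalues, with multiplicity, of a real square matrix:
the real roots of its characteristic polynomial. -/
noncomputable def eigMult {ι : Type*} [Fintype ι] [DecidableEq ι] (A : Matrix ι ι ℝ) :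
    Multiset ℝ :=
  A.charpoly.roots

section FinDefs

variable {n : ℕ}

/-- The non-increasing rearrangement of a real vector. -/
noncomputable def sortDesc (x : Fin n → ℝ) : Fin n → ℝ :=
  fun i => x (Tuple.sort (fun j => -x j) i)

/-- `Φ(ξ) = ∫₀^ξ φ`, where `φ(ξ) = x'_i` for `i - 1 < ξ ≤ i` and `x'` is the
non-increasing rearrangement of `x`. -/
noncomputable def bigPhi (x : Fin n → ℝ) (ξ : ℝ) : ℝ :=
  ∑ i : Fin n, sortDesc x i * min 1 (max 0 (ξ - (i : ℝ)))

/-- BSC pseudoweight: `2 Φ⁻¹(Φ(n)/2)`. -/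
noncomputable def wBSC (x : Fin n → ℝ) : ℝ :=
  2 * sInf {ξ : ℝ | bigPhi x (n : ℝ) / 2 ≤ bigPhi x ξ}

/-- The pseudocodeword redundancy of a code `C` w.r.t. the pseudoweight function `w`:
the smallest number of rows of a parity-check matrix `H` of `C` whose minimum
pseudoweight equals the minimum distance of `C` (`⊤` if there is no such matrix). -/
noncomputable def pcRedundancy (w : (Fin n → ℝ) → ℝ)
    (C : Submodule (ZMod 2) (Fin n → ZMod 2)) : ℕ∞ :=
  sInf {k : ℕ∞ | ∃ (m : ℕ) (H : Matrix (Fin m) (Fin n) (ZMod 2)),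
    k = (m : ℕ∞) ∧ IsParityCheck H C ∧ minPW w H = ((minDist C : ℝ) : EReal)}

end FinDefs

section AuxPW

open Finset

noncomputable def clampR (t : ℝ) : ℝ := min 1 (max 0 t)

lemma clampR_nonneg (t : ℝ) : 0 ≤ clampR t := le_min zero_le_one (le_max_left _ _)

lemma clampR_le_one (t : ℝ) : clampR t ≤ 1 := min_le_left _ _

lemma clampR_add (a b : ℝ) (h : a + b = 1) : clampR a + clampR b = 1 := by
  unfold clampR; simp only [min_def, max_def]; split_ifs <;> linarith

lemma clampR_of_le (t : ℝ) (h : 1 ≤ t) : clampR t = 1 := by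
  unfold clampR; rw [max_eq_right (by linarith), min_eq_left h]

lemma sum_clampR_le (m : ℕ) : ∀ ξ : ℝ, ∑ i ∈ range m, clampR (ξ - i) ≤ max 0 ξ := by
  induction m with
  | zero => intro ξ; simp [le_max_left]
  | succ k ih =>
    intro ξ
    rw [Finset.sum_range_succ' (fun i => clampR (ξ - i)) k]
    have h2 : ∑ i ∈ range k, clampR (ξ - (↑i + 1)) ≤ max 0 (ξ - 1) := by
      have := ih (ξ - 1)
      simpa [sub_sub, add_comm] using this
    have h2' : ∑ i ∈ range k, clampR (ξ - ↑(i + 1)) ≤ max 0 (ξ - 1) := by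
      refine le_trans (le_of_eq (Finset.sum_congr rfl fun i _ => ?_)) h2
      push_cast; ring_nf
    refine le_trans (add_le_add h2' le_rfl) ?_
    unfold clampR; simp only [min_def, max_def, Nat.cast_zero, sub_zero]
    split_ifs <;> linarith

lemma sum_clampR_half (e : ℕ) : ∑ i ∈ range e, clampR ((e : ℝ)/2 - i) = (e : ℝ)/2 := by
  have hrefl : ∑ i ∈ range e, clampR ((e : ℝ)/2 - ↑(e - 1 - i))
      = ∑ i ∈ range e, clampR ((e : ℝ)/2 - i) :=
    Finset.sum_range_reflect (fun i => clampR ((e : ℝ)/2 - i)) e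
  have key : ∑ i ∈ range e, (clampR ((e : ℝ)/2 - i) + clampR ((e : ℝ)/2 - ↑(e - 1 - i)))
      = (e : ℝ) := by
    rw [Finset.sum_congr rfl (fun i hi => ?_)]
    · rw [Finset.sum_const, card_range, nsmul_eq_mul, mul_one]
    · apply clampR_add
      rw [mem_range] at hi
      have : ((e - 1 - i : ℕ) : ℝ) = (e : ℝ) - 1 - i := by
        have h1 : i ≤ e - 1 := by omega
        push_cast [Nat.cast_sub h1, Nat.cast_sub (by omega : 1 ≤ e)]
        ring
      rw [this]; ring
  rw [Finset.sum_add_distrib, hrefl] at key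
  linarith

lemma sortDesc_antitone {n : ℕ} (x : Fin n → ℝ) : Antitone (sortDesc x) := by
  intro i j hij
  have h := Tuple.monotone_sort (fun j => -x j) hij
  simpa [sortDesc] using h

lemma sortDesc_sum {n : ℕ} (x : Fin n → ℝ) : ∑ i, sortDesc x i = ∑ i, x i :=
  Equiv.sum_comp (Tuple.sort (fun j => -x j)) x

lemma sortDesc_card {n : ℕ} (x : Fin n → ℝ) :
    (univ.filter fun i => sortDesc x i ≠ 0).card = (univ.filter fun i => x i ≠ 0).card := by
  apply Finset.card_bij (fun i _ => Tuple.sort (fun j => -x j) i)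
  · intro a ha; simp only [mem_filter, mem_univ, true_and] at ha ⊢; exact ha
  · intro a _ b _ hab; exact (Tuple.sort (fun j => -x j)).injective hab
  · intro b hb
    refine ⟨(Tuple.sort (fun j => -x j)).symm b, ?_, by simp⟩
    simp only [mem_filter, mem_univ, true_and, sortDesc, Equiv.apply_symm_apply] at hb ⊢
    exact Finset.mem_filter.mpr ⟨mem_univ _, by simpa [sortDesc] using hb⟩

lemma sortDesc_eq_zero {n : ℕ} {x : Fin n → ℝ} (hnn : ∀ i, 0 ≤ x i) {i : Fin n}
    (hi : (univ.filter fun j => x j ≠ 0).card ≤ i.val) : sortDesc x i = 0 := by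
  by_contra h
  have hsub : Finset.Iic i ⊆ univ.filter (fun j => sortDesc x j ≠ 0) := by
    intro j hj
    simp only [Finset.mem_Iic] at hj
    simp only [mem_filter, mem_univ, true_and]
    intro hz
    have h1 : sortDesc x i ≤ sortDesc x j := sortDesc_antitone x hj
    have h2 : 0 ≤ sortDesc x i := hnn _
    exact h (le_antisymm (hz ▸ h1) h2)
  have hc := Finset.card_le_card hsub
  rw [Fin.card_Iic, sortDesc_card] at hc
  omega

lemma ncard_support_eq {n : ℕ} (x : Fin n → ℝ) :
    ({i | x i ≠ 0} : Set (Fin n)).ncard = (univ.filter fun i => x i ≠ 0).card := by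
  rw [show ({i | x i ≠ 0} : Set (Fin n)) = ↑(univ.filter fun i => x i ≠ 0) by
    ext i; simp]
  exact Set.ncard_coe_finset _

/-- The key bounds for the BSC pseudoweight of a nonneg nonzero vector. -/
lemma bsc_bounds {n : ℕ} (x : Fin n → ℝ) (hnn : ∀ i, 0 ≤ x i) (hx0 : x ≠ 0) :
    (∑ i, x i) / sSup (Set.range x) ≤ wBSC x ∧
      wBSC x ≤ ((univ.filter fun i => x i ≠ 0).card : ℝ) := by
  obtain ⟨i0, hi0⟩ : ∃ i, x i ≠ 0 := by
    by_contra hc; push_neg at hc; exact hx0 (funext hc)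
  have hi0' : 0 < x i0 := lt_of_le_of_ne (hnn i0) (Ne.symm hi0)
  set S := ∑ i, x i with hSdef
  have hS : 0 < S := Finset.sum_pos' (fun i _ => hnn i) ⟨i0, mem_univ _, hi0'⟩
  set M := sSup (Set.range x) with hMdef
  have hxM : ∀ i, x i ≤ M := fun i =>
    le_csSup (Set.finite_range x).bddAbove ⟨i, rfl⟩
  have hM : 0 < M := lt_of_lt_of_le hi0' (hxM i0)
  set e := (univ.filter fun i => x i ≠ 0).card with hedef
  have he : 0 < e := Finset.card_pos.mpr ⟨i0, by simp [hi0]⟩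
  have hen : e ≤ n := le_trans (Finset.card_filter_le _ _) (by simp)
  set Y : ℕ → ℝ := fun k => if h : k < n then sortDesc x ⟨k, h⟩ else 0 with hYdef
  have hYnn : ∀ k, 0 ≤ Y k := by
    intro k; simp only [hYdef]; split
    · exact hnn _
    · exact le_rfl
  have hYM : ∀ k, Y k ≤ M := by
    intro k; simp only [hYdef]; split
    · exact hxM _
    · exact hM.le
  have hYanti : Antitone Y := by
    intro k l hkl
    simp only [hYdef]
    split <;> split
    · exact sortDesc_antitone x (by simpa using hkl)
    · omega
    · exact hnn _
    · exact le_rfl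
  have hY0 : ∀ k, e ≤ k → Y k = 0 := by
    intro k hk
    simp only [hYdef]; split
    · exact sortDesc_eq_zero hnn (by simpa using hk)
    · rfl
  have hYsum : ∑ i ∈ range n, Y i = S := by
    rw [← Fin.sum_univ_eq_sum_range Y n, hSdef, ← sortDesc_sum x]
    exact Finset.sum_congr rfl fun i _ => by simp [hYdef, i.isLt]
  have hbig : ∀ ξ : ℝ, bigPhi x ξ = ∑ i ∈ range n, Y i * clampR (ξ - i) := by
    intro ξ
    rw [bigPhi, ← Fin.sum_univ_eq_sum_range (fun k => Y k * clampR (ξ - k)) n]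
    exact Finset.sum_congr rfl fun i _ => by simp [hYdef, clampR, i.isLt]
  have hPhin : bigPhi x (n : ℝ) = S := by
    rw [hbig, ← hYsum]
    refine Finset.sum_congr rfl fun i hi => ?_
    rw [mem_range] at hi
    rw [clampR_of_le _ (by
      have : (i : ℝ) + 1 ≤ n := by exact_mod_cast hi
      linarith), mul_one]
  have hPhile : ∀ ξ : ℝ, bigPhi x ξ ≤ M * max 0 ξ := by
    intro ξ
    rw [hbig]
    calc ∑ i ∈ range n, Y i * clampR (ξ - i)
        ≤ ∑ i ∈ range n, M * clampR (ξ - i) :=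
          Finset.sum_le_sum fun i _ =>
            mul_le_mul_of_nonneg_right (hYM i) (clampR_nonneg _)
      _ = M * ∑ i ∈ range n, clampR (ξ - i) := by rw [Finset.mul_sum]
      _ ≤ M * max 0 ξ := mul_le_mul_of_nonneg_left (sum_clampR_le n ξ) hM.le
  set T := {ξ : ℝ | bigPhi x (n : ℝ) / 2 ≤ bigPhi x ξ} with hTdef
  have hTne : (n : ℝ) ∈ T := by
    simp only [hTdef, Set.mem_setOf_eq]; linarith [hPhin ▸ hS]
  have hTlb : ∀ ξ ∈ T, S / (2 * M) ≤ ξ := by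
    intro ξ hξ
    simp only [hTdef, Set.mem_setOf_eq, hPhin] at hξ
    have h1 : S / 2 ≤ M * max 0 ξ := le_trans hξ (hPhile ξ)
    rcases le_or_gt ξ 0 with h | h
    · rw [max_eq_left h, mul_zero] at h1; linarith
    · rw [max_eq_right h.le] at h1
      rw [div_le_iff₀ (by positivity)]
      nlinarith
  have hBdd : BddBelow T := ⟨S / (2 * M), hTlb⟩
  have hsInf_lb : S / (2 * M) ≤ sInf T := le_csInf ⟨(n : ℝ), hTne⟩ hTlb
  constructor
  · -- S / M ≤ wBSC x
    rw [wBSC, ← hTdef]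
    have h2 : S / M = 2 * (S / (2 * M)) := by field_simp
    rw [h2]
    linarith
  · -- wBSC x ≤ e
    have hmem : (e : ℝ) / 2 ∈ T := by
      simp only [hTdef, Set.mem_setOf_eq, hPhin, hbig]
      have hsub : range e ⊆ range n := Finset.range_subset_range.mpr hen
      have step1 : ∑ i ∈ range e, Y i * clampR ((e : ℝ)/2 - i)
          ≤ ∑ i ∈ range n, Y i * clampR ((e : ℝ)/2 - i) :=
        Finset.sum_le_sum_of_subset_of_nonneg hsub fun i _ _ =>
          mul_nonneg (hYnn i) (clampR_nonneg _)
      have hmono : MonovaryOn Y (fun i => clampR ((e : ℝ)/2 - i)) (range e) := by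
        intro i _ j _ hij
        have hij' : j ≤ i := by
          by_contra hc
          push_neg at hc
          have hle : clampR ((e : ℝ)/2 - j) ≤ clampR ((e : ℝ)/2 - i) := by
            apply min_le_min le_rfl
            apply max_le_max le_rfl
            have : (i : ℝ) ≤ j := by exact_mod_cast hc.le
            linarith
          exact absurd hij (by simpa using not_lt.mpr hle)
        exact hYanti hij'
      have cheb := hmono.sum_mul_sum_le_card_mul_sum
      rw [card_range, sum_clampR_half] at cheb
      have hYsum_e : ∑ i ∈ range e, Y i = S := by
        rw [← hYsum]
        exact Finset.sum_subset hsub fun i hi hni => hY0 i (by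
          rw [mem_range] at hni; omega)
      rw [hYsum_e] at cheb
      have he' : (0 : ℝ) < e := by exact_mod_cast he
      nlinarith
    have h1 : sInf T ≤ (e : ℝ) / 2 := csInf_le hBdd hmem
    rw [wBSC]
    linarith

lemma minPW_mono {J I : Type*} [Fintype J] [Fintype I] [DecidableEq I]
    {w1 w2 : (I → ℝ) → ℝ} (H : Matrix J I (ZMod 2))
    (h : ∀ x ∈ fundCone H \ {0}, w1 x ≤ w2 x) : minPW w1 H ≤ minPW w2 H := by
  apply le_sInf
  rintro b ⟨x, hx, rfl⟩
  exact le_trans (sInf_le ⟨x, hx, rfl⟩) (EReal.coe_le_coe_iff.mpr (h x hx))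

end AuxPW

/-- For a binary linear code `C` with parity-check matrix `H`,
`w_maxfrac^min(H) ≤ w_AWGNC^min(H) ≤ w_BEC^min(H)` and
`w_maxfrac^min(H) ≤ w_BSC^min(H) ≤ w_BEC^min(H)`. -/
theorem statement0 {m n : ℕ} (C : Submodule (ZMod 2) (Fin n → ZMod 2))
    (H : Matrix (Fin m) (Fin n) (ZMod 2)) (hH : IsParityCheck H C) :
    minPW wMaxFrac H ≤ minPW wAWGNC H ∧ minPW wAWGNC H ≤ minPW wBEC H ∧
    minPW wMaxFrac H ≤ minPW wBSC H ∧ minPW wBSC H ≤ minPW wBEC H := by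
  have key : ∀ x ∈ fundCone H \ ({0} : Set (Fin n → ℝ)),
      wMaxFrac x ≤ wAWGNC x ∧ wAWGNC x ≤ wBEC x ∧
        wMaxFrac x ≤ wBSC x ∧ wBSC x ≤ wBEC x := by
    rintro x ⟨hx, hx0⟩
    obtain ⟨hnn, -⟩ := hx
    have hx0' : x ≠ 0 := hx0
    obtain ⟨i0, hi0⟩ : ∃ i, x i ≠ 0 := by
      by_contra hc; push_neg at hc; exact hx0' (funext hc)
    have hi0' : 0 < x i0 := lt_of_le_of_ne (hnn i0) (Ne.symm hi0)
    set S := ∑ i, x i with hSdef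
    have hS : 0 < S := Finset.sum_pos' (fun i _ => hnn i) ⟨i0, mem_univ _, hi0'⟩
    have hxM : ∀ i, x i ≤ sSup (Set.range x) := fun i =>
      le_csSup (Set.finite_range x).bddAbove ⟨i, rfl⟩
    have hM : 0 < sSup (Set.range x) := lt_of_lt_of_le hi0' (hxM i0)
    set Q := ∑ i, x i ^ 2 with hQdef
    have hQ : 0 < Q :=
      Finset.sum_pos' (fun i _ => sq_nonneg _) ⟨i0, mem_univ _, by positivity⟩
    set s := univ.filter (fun i => x i ≠ 0) with hsdef
    have hwbec : wBEC x = (s.card : ℝ) := by rw [wBEC, ncard_support_eq]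
    have hQle : Q ≤ sSup (Set.range x) * S := by
      rw [hQdef, hSdef, Finset.mul_sum]
      exact Finset.sum_le_sum fun i _ => by
        rw [sq]; exact mul_le_mul_of_nonneg_right (hxM i) (hnn i)
    have hcs : S ^ 2 ≤ (s.card : ℝ) * Q := by
      have h1 : S = ∑ i ∈ s, x i := by
        rw [hSdef]
        refine (Finset.sum_subset (Finset.subset_univ s) fun i _ hni => ?_).symm
        simp only [hsdef, mem_filter, mem_univ, true_and, not_not] at hni
        exact hni
      have h2 : (∑ i ∈ s, x i) ^ 2 ≤ (s.card : ℝ) * ∑ i ∈ s, x i ^ 2 :=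
        sq_sum_le_card_mul_sum_sq
      have h3 : ∑ i ∈ s, x i ^ 2 ≤ Q :=
        Finset.sum_le_sum_of_subset_of_nonneg (Finset.subset_univ s)
          (fun i _ _ => sq_nonneg _)
      calc S ^ 2 = (∑ i ∈ s, x i) ^ 2 := by rw [h1]
        _ ≤ (s.card : ℝ) * ∑ i ∈ s, x i ^ 2 := h2
        _ ≤ (s.card : ℝ) * Q := mul_le_mul_of_nonneg_left h3 (Nat.cast_nonneg _)
    refine ⟨?_, ?_, (bsc_bounds x hnn hx0').1, by
      rw [hwbec]; exact (bsc_bounds x hnn hx0').2⟩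
    · rw [wMaxFrac, wAWGNC, div_le_div_iff₀ hM hQ]
      nlinarith
    · rw [wAWGNC, hwbec, div_le_iff₀ hQ]
      exact hcs
  exact ⟨minPW_mono H fun x hx => (key x hx).1,
    minPW_mono H fun x hx => (key x hx).2.1,
    minPW_mono H fun x hx => (key x hx).2.2.1,
    minPW_mono H fun x hx => (key x hx).2.2.2⟩
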